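/- Let f : (ℂ^n,0) → (ℂ^n,0) be a finite holomorphic germ. Then l_0(f) = (min_{i=1,…,n} o_f(z_i))^{−1}, where z_i denotes the i-th coordinate function. -/

import Mathlib

open Filter Topology Polynomial

noncomputable section

namespace LojPaper

/-- The ring of germs at a filter of `ℂ`-valued functions is a `ℂ`-algebra. -/
instance germAlgebra {α : Type*} (l : Filter α) : Algebra ℂ (Filter.Germ l ℂ) where
  algebraMap := (Filter.Germ.coeRingHom l).comp (Pi.constRingHom α ℂ)
  commutes' r g := mul_comm _ _
  smul_def' r g := by
    refine g.inductionOn fun u => ?_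
    change ((r • u : α → ℂ) : Filter.Germ l ℂ) = ((fun _ => r : α → ℂ) : Filter.Germ l ℂ) * ↑u
    rw [← Filter.Germ.coe_mul]
    rfl

variable {E E' : Type*} [NormedAddCommGroup E] [NormedSpace ℂ E]
  [NormedAddCommGroup E'] [NormedSpace ℂ E']

/-- The subalgebra of germs at `0 ∈ E` represented by holomorphic (analytic) functions:
the counterpart of the ring `ℂ{z}` of convergent power series. -/
def analyticGermsAt (E : Type*) [NormedAddCommGroup E] [NormedSpace ℂ E] :
    Subalgebra ℂ (Filter.Germ (𝓝 (0 : E)) ℂ) where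
  carrier := {g | ∃ u : E → ℂ, AnalyticAt ℂ u 0 ∧ g = ↑u}
  mul_mem' := by
    rintro _ _ ⟨u, hu, rfl⟩ ⟨v, hv, rfl⟩
    exact ⟨u * v, hu.mul hv, rfl⟩
  add_mem' := by
    rintro _ _ ⟨u, hu, rfl⟩ ⟨v, hv, rfl⟩
    exact ⟨u + v, hu.add hv, rfl⟩
  algebraMap_mem' := fun c => ⟨fun _ => c, analyticAt_const, rfl⟩

/-- The ideal of the ring of analytic germs at `0 ∈ E` generated by the germs of a family
of functions; for the components `f₁, …, fₙ` of a map this is the ideal `I(f)`. -/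
def idealOfFamily {ι : Type*} (f : ι → E → ℂ) : Ideal (analyticGermsAt E) :=
  Ideal.span {g : analyticGermsAt E | ∃ i, (g : Filter.Germ (𝓝 (0 : E)) ℂ) = ↑(f i)}

/-- The multiplicity `dim_ℂ ℂ{z}/I(f)` attached to a family of analytic functions. -/
def multiplicityOfFamily {ι : Type*} (f : ι → E → ℂ) : ℕ :=
  Module.finrank ℂ ((analyticGermsAt E) ⧸ idealOfFamily f)

/-- The multiplicity `m₀(f) = dim_ℂ ℂ{z}/I(f)` of a holomorphic map germ. -/
def germMult {n : ℕ} (f : E → (Fin n → ℂ)) : ℕ :=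
  multiplicityOfFamily fun i z => f z i

/-- `f` represents a finite holomorphic germ `(E,0) → (ℂⁿ,0)` : it is analytic at `0`,
maps `0` to `0` and has an isolated zero at the origin. -/
structure IsFiniteGerm {n : ℕ} (f : E → (Fin n → ℂ)) : Prop where
  analyticAt : ∀ i, AnalyticAt ℂ (fun z => f z i) 0
  map_zero : f 0 = 0
  isolatedZero : ∃ U ∈ 𝓝 (0 : E), ∀ z ∈ U, f z = 0 → z = 0

/-- The Łojasiewicz exponent `l₀(f)`: the smallest `θ > 0` such that
`|f(z)| ≥ c|z|^θ` with some `c > 0` on some neighbourhood of `0`. -/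
def lojExp (f : E → E') : ℝ :=
  sInf {θ : ℝ | 0 < θ ∧ ∃ c : ℝ, 0 < c ∧ ∀ᶠ z in 𝓝 (0 : E), c * ‖z‖ ^ θ ≤ ‖f z‖}

/-- The Łojasiewicz exponent `o_f(h)` of `h` relative to `f`: the least upper bound of all
`θ > 0` such that `|h(z)| ≤ c|f(z)|^θ` with some `c > 0` on some neighbourhood of `0`. -/
def relLojExp (f : E → E') (h : E → ℂ) : ℝ :=
  sSup {θ : ℝ | 0 < θ ∧ ∃ c : ℝ, 0 < c ∧ ∀ᶠ z in 𝓝 (0 : E), ‖h z‖ ≤ c * ‖f z‖ ^ θ}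

/-- `F : P × ℂⁿ → ℂⁿ` is a deformation of the germ `f` (with parameter space `P`):
`F` is analytic at the origin, `F(0,z) = f(z)` as germs and `F(t,0) = 0` as germs. -/
structure IsDeformation {n : ℕ} {P : Type*} [NormedAddCommGroup P] [NormedSpace ℂ P]
    (F : P × (Fin n → ℂ) → (Fin n → ℂ)) (f : (Fin n → ℂ) → (Fin n → ℂ)) : Prop where
  analyticAt : ∀ i, AnalyticAt ℂ (fun p => F p i) 0
  zero_param : ∀ᶠ z in 𝓝 (0 : Fin n → ℂ), F (0, z) = f z
  zero_fiber : ∀ᶠ t in 𝓝 (0 : P), F (t, 0) = 0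

/-- Composition with `f` as a ring homomorphism on germs at `0`. -/
def germCompRingHom (f : E → E') (hf : Filter.Tendsto f (𝓝 (0 : E)) (𝓝 (0 : E'))) :
    Filter.Germ (𝓝 (0 : E')) ℂ →+* Filter.Germ (𝓝 (0 : E)) ℂ where
  toFun g := g.compTendsto f hf
  map_one' := rfl
  map_zero' := rfl
  map_mul' g₁ g₂ := by
    refine g₁.inductionOn fun u => g₂.inductionOn fun v => ?_
    rfl
  map_add' g₁ g₂ := by
    refine g₁.inductionOn fun u => g₂.inductionOn fun v => ?_
    rfl

end LojPaper

namespace LojPaper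

variable {E E' : Type*} [NormedAddCommGroup E] [NormedSpace ℂ E]
  [NormedAddCommGroup E'] [NormedSpace ℂ E']

/-- `Q(f,h) = 0` : the polynomial `Q` with coefficients in the ring `ℂ{w}` of analytic germs
on the target annihilates the pair `(f,h)`, i.e. substituting `w := f(z)`, `s := h(z)`
gives the zero germ. -/
def AnnihilatesPair (f : E → E') (hf : Filter.Tendsto f (𝓝 (0 : E)) (𝓝 (0 : E')))
    (h : E → ℂ) (Q : Polynomial (analyticGermsAt E')) : Prop :=
  Polynomial.eval₂ ((germCompRingHom f hf).comp (analyticGermsAt E').val.toRingHom)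
    (↑h : Filter.Germ (𝓝 (0 : E)) ℂ) Q = 0

/-- `P` is the characteristic polynomial of `h` relative to `f` (a germ of multiplicity `m`):
`P = Q^r` where `Q ∈ ℂ{w}[s]` is the (unique) monic irreducible polynomial with `Q(f,h) = 0`
and `r·deg Q = m`. -/
def IsCharPoly (m : ℕ) (f : E → E') (h : E → ℂ)
    (P : Polynomial (Filter.Germ (𝓝 (0 : E')) ℂ)) : Prop :=
  ∃ (hf : Filter.Tendsto f (𝓝 (0 : E)) (𝓝 (0 : E')))
    (Q : Polynomial (analyticGermsAt E')) (r : ℕ),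
      Q.Monic ∧ Irreducible Q ∧ AnnihilatesPair f hf h Q ∧
      Q.natDegree * r = m ∧ P = (Q ^ r).map (analyticGermsAt E').val.toRingHom

/-- The monic polynomial `s^m + a₁(w)s^{m-1} + ⋯ + a_m(w)` (with `a i = a_{i+1}`),
as a polynomial with coefficients in the ring of germs at `0 ∈ E`. -/
def polyOfCoeffFuns (m : ℕ) (a : Fin m → (E → ℂ)) :
    Polynomial (Filter.Germ (𝓝 (0 : E)) ℂ) :=
  Polynomial.X ^ m +
    ∑ i : Fin m, Polynomial.C (↑(a i) : Filter.Germ (𝓝 (0 : E)) ℂ) *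
      Polynomial.X ^ (m - (i.1 + 1))

/-- The value of `s^m + a₁(w)s^{m-1} + ⋯ + a_m(w)` at a point `(w,s)`. -/
def monicPolyValue (m : ℕ) (a : Fin m → (E → ℂ)) (w : E) (s : ℂ) : ℂ :=
  s ^ m + ∑ i : Fin m, a i w * s ^ (m - (i.1 + 1))

/-- The order of vanishing at `0` of a function (finite holomorphic case):
the least `d` such that the `d`-th derivative at `0` is nonzero. -/
def vanishOrder (g : E → ℂ) : ℕ :=
  sInf {d : ℕ | iteratedFDeriv ℂ d g 0 ≠ 0}

/-- `f : U → V` is an `m`-sheeted branched covering: it maps `U` onto `V`, is proper over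
`V`, and away from a thin (relatively closed, with empty interior) branch locus `Z ⊆ V`
every point of `V \ Z` has a neighbourhood over which `f` has exactly `m` disjoint
continuous local sections covering the whole preimage. -/
structure IsBranchedCoveringOn (m : ℕ) (f : E → E') (U : Set E) (V : Set E') : Prop where
  mapsTo : Set.MapsTo f U V
  surjOn : Set.SurjOn f U V
  proper : ∀ K ⊆ V, IsCompact K → IsCompact (U ∩ f ⁻¹' K)
  branched : ∃ Z ⊆ V, closure Z ∩ V ⊆ Z ∧ interior Z = ∅ ∧
    ∀ w ∈ V \ Z, ∃ W ∈ 𝓝 w, W ⊆ V \ Z ∧ ∃ g : Fin m → E' → E,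
      (∀ i, ContinuousOn (g i) W) ∧
      (∀ i, ∀ w' ∈ W, g i w' ∈ U ∧ f (g i w') = w') ∧
      (∀ i j, ∀ w' ∈ W, g i w' = g j w' → i = j) ∧
      (∀ z ∈ U, f z ∈ W → ∃ i, z = g i (f z))

/-- The closed upper-right quadrant with corner `v`. -/
def quadrantAt (v : ℝ × ℝ) : Set (ℝ × ℝ) := {p | v.1 ≤ p.1 ∧ v.2 ≤ p.2}

/-- The Newton polygon `𝒩(P)` of the distinguished polynomial
`P = s^m + a₁(w)s^{m-1} + ⋯ + a_m(w)` : the convex hull of the union of the quadrants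
with corners `(ord aᵢ, m - i)` for `i` with `aᵢ ≠ 0` (including `(0,m)` for `a₀ = 1`). -/
def newtonPolygon (m : ℕ) (a : Fin m → (E → ℂ)) : Set (ℝ × ℝ) :=
  convexHull ℝ (quadrantAt (0, (m : ℝ)) ∪
    ⋃ i ∈ {i : Fin m | (↑(a i) : Filter.Germ (𝓝 (0 : E)) ℂ) ≠ 0},
      quadrantAt ((vanishOrder (a i) : ℝ), ((m - (i.1 + 1) : ℕ) : ℝ)))

/-- The Newton polygon `𝒩(f,h) = σ(𝒩(P_{f,h}))` of `h` relative to `f`, where `σ` swaps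
the two coordinates; here given in terms of coefficient data of the characteristic
polynomial. -/
def relNewtonPolygon (m : ℕ) (a : Fin m → (E → ℂ)) : Set (ℝ × ℝ) :=
  (fun p : ℝ × ℝ => (p.2, p.1)) '' newtonPolygon m a

/-- The germ of the `i`-th coordinate function, as an analytic germ. -/
def coordGerm {n : ℕ} (i : Fin n) : analyticGermsAt (Fin n → ℂ) :=
  ⟨(↑(fun w : Fin n → ℂ => w i) : Filter.Germ (𝓝 (0 : Fin n → ℂ)) ℂ),
    (⟨fun w : Fin n → ℂ => w i,
    (ContinuousLinearMap.proj (R := ℂ) (φ := fun _ : Fin n => ℂ) i).analyticAt 0, rfl⟩ :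
      ∃ u : (Fin n → ℂ) → ℂ, AnalyticAt ℂ u 0 ∧
        (↑(fun w : Fin n → ℂ => w i) : Filter.Germ (𝓝 (0 : Fin n → ℂ)) ℂ) = ↑u)⟩

end LojPaper

namespace LojPaper

/-- **Lemma 3.4.** For a finite holomorphic germ `f : (ℂⁿ,0) → (ℂⁿ,0)`,
`l₀(f) = (min_{i=1,…,n} o_f(zᵢ))⁻¹`, where `zᵢ` is the `i`-th coordinate function. -/
theorem lojExp_eq_inv_min_relLojExp_coords {n : ℕ} (hn : 0 < n)
    (f : (Fin n → ℂ) → (Fin n → ℂ)) (hf : IsFiniteGerm f) :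
    lojExp f = (sInf {x : ℝ | ∃ i : Fin n, x = relLojExp f fun z => z i})⁻¹ := by
  classical
  set S : Set ℝ :=
    {θ : ℝ | 0 < θ ∧ ∃ c : ℝ, 0 < c ∧ ∀ᶠ z in 𝓝 (0 : Fin n → ℂ), c * ‖z‖ ^ θ ≤ ‖f z‖}
    with hSdef
  set T : Fin n → Set ℝ := fun i =>
    {θ : ℝ | 0 < θ ∧ ∃ c : ℝ, 0 < c ∧ ∀ᶠ z in 𝓝 (0 : Fin n → ℂ), ‖z i‖ ≤ c * ‖f z‖ ^ θ}
    with hTdef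
  have hrel : ∀ i, relLojExp f (fun z => z i) = sSup (T i) := fun i => rfl
  have hloj : lojExp f = sInf S := rfl
  -- basic analytic facts
  have hcont : ContinuousAt f 0 :=
    continuousAt_pi.2 fun i => (hf.analyticAt i).continuousAt
  have htend : Filter.Tendsto f (𝓝 0) (𝓝 (0 : Fin n → ℂ)) := by
    simpa [hf.map_zero] using hcont.tendsto
  have hsmall : ∀ᶠ z in 𝓝 (0 : Fin n → ℂ), ‖f z‖ ≤ 1 := by
    have h1 : ∀ᶠ y in 𝓝 (0 : Fin n → ℂ), ‖y‖ ≤ 1 := by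
      filter_upwards [Metric.closedBall_mem_nhds (0 : Fin n → ℂ) one_pos] with y hy
      simpa [Metric.mem_closedBall, dist_zero_right] using hy
    exact htend.eventually h1
  have hbigO : ∃ C : ℝ, 0 < C ∧ ∀ᶠ z in 𝓝 (0 : Fin n → ℂ), ‖f z‖ ≤ C * ‖z‖ := by
    have hdiff : DifferentiableAt ℂ f 0 :=
      differentiableAt_pi.2 fun i => ((hf.analyticAt i).differentiableAt :)
    have hO := hdiff.hasFDerivAt.isBigO_sub
    simp only [hf.map_zero, sub_zero] at hO
    obtain ⟨C, hC, hb⟩ := hO.exists_pos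
    exact ⟨C, hC, (Asymptotics.isBigOWith_iff.mp hb).mono fun z hz => by simpa using hz⟩
  -- T i is a "down-set"
  have hTdown : ∀ i, ∀ t ∈ T i, ∀ t' : ℝ, 0 < t' → t' ≤ t → t' ∈ T i := by
    intro i t ht t' ht' htt'
    obtain ⟨htpos, c, hc, hev⟩ := ht
    refine ⟨ht', c, hc, ?_⟩
    filter_upwards [hev, hsmall] with z hz hz1
    refine hz.trans (mul_le_mul_of_nonneg_left ?_ hc.le)
    rcases eq_or_lt_of_le (norm_nonneg (f z)) with h0 | h0
    · rw [← h0, Real.zero_rpow htpos.ne', Real.zero_rpow ht'.ne']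
    · exact Real.rpow_le_rpow_of_exponent_ge h0 hz1 htt'
  -- from S to T
  have hST : ∀ θ ∈ S, ∀ i, θ⁻¹ ∈ T i := by
    intro θ hθ i
    obtain ⟨hθpos, c, hc, hev⟩ := hθ
    refine ⟨inv_pos.2 hθpos, (c⁻¹) ^ θ⁻¹, Real.rpow_pos_of_pos (inv_pos.2 hc) _, ?_⟩
    filter_upwards [hev] with z hz
    have h1 : ‖z‖ ^ θ ≤ c⁻¹ * ‖f z‖ := by
      rw [inv_mul_eq_div, le_div_iff₀ hc, mul_comm]
      exact hz
    have h2 : (‖z‖ ^ θ) ^ θ⁻¹ ≤ (c⁻¹ * ‖f z‖) ^ θ⁻¹ :=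
      Real.rpow_le_rpow (Real.rpow_nonneg (norm_nonneg z) θ) h1 (inv_nonneg.2 hθpos.le)
    rw [← Real.rpow_mul (norm_nonneg z), mul_inv_cancel₀ hθpos.ne', Real.rpow_one,
      Real.mul_rpow (inv_nonneg.2 hc.le) (norm_nonneg (f z))] at h2
    exact (norm_le_pi_norm z i).trans h2
  -- from T to S
  have hTS : ∀ t : ℝ, 0 < t → (∀ i, t ∈ T i) → t⁻¹ ∈ S := by
    intro t ht hti
    have hch : ∀ i, ∃ c : ℝ, 0 < c ∧ ∀ᶠ z in 𝓝 (0 : Fin n → ℂ), ‖z i‖ ≤ c * ‖f z‖ ^ t :=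
      fun i => (hti i).2
    choose c hc0 hcev using hch
    set C0 : ℝ := ∑ i, c i with hC0def
    have hC0pos : 0 < C0 := Finset.sum_pos (fun i _ => hc0 i) ⟨⟨0, hn⟩, Finset.mem_univ _⟩
    have hC0le : ∀ i, c i ≤ C0 := fun i =>
      Finset.single_le_sum (fun j _ => (hc0 j).le) (Finset.mem_univ i)
    refine ⟨inv_pos.2 ht, (C0⁻¹) ^ t⁻¹, Real.rpow_pos_of_pos (inv_pos.2 hC0pos) _, ?_⟩
    have hall : ∀ᶠ z in 𝓝 (0 : Fin n → ℂ), ∀ i, ‖z i‖ ≤ c i * ‖f z‖ ^ t :=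
      eventually_all.2 hcev
    filter_upwards [hall] with z hz
    have hnorm : ‖z‖ ≤ C0 * ‖f z‖ ^ t := by
      refine (pi_norm_le_iff_of_nonneg (by positivity)).2 fun i => ?_
      exact (hz i).trans (mul_le_mul_of_nonneg_right (hC0le i)
        (Real.rpow_nonneg (norm_nonneg _) _))
    have h2 : ‖z‖ ^ t⁻¹ ≤ (C0 * ‖f z‖ ^ t) ^ t⁻¹ :=
      Real.rpow_le_rpow (norm_nonneg z) hnorm (inv_nonneg.2 ht.le)
    rw [Real.mul_rpow hC0pos.le (Real.rpow_nonneg (norm_nonneg _) _),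
      ← Real.rpow_mul (norm_nonneg (f z)), mul_inv_cancel₀ ht.ne', Real.rpow_one] at h2
    calc (C0⁻¹) ^ t⁻¹ * ‖z‖ ^ t⁻¹
        ≤ (C0⁻¹) ^ t⁻¹ * (C0 ^ t⁻¹ * ‖f z‖) :=
          mul_le_mul_of_nonneg_left h2 (Real.rpow_nonneg (by positivity) _)
      _ = ((C0⁻¹) ^ t⁻¹ * C0 ^ t⁻¹) * ‖f z‖ := by ring
      _ = ‖f z‖ := by
          rw [← Real.mul_rpow (by positivity) hC0pos.le, inv_mul_cancel₀ hC0pos.ne',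
            Real.one_rpow, one_mul]
  -- T i is bounded above (by 1)
  have hTbdd : ∀ i, BddAbove (T i) := by
    intro i
    refine ⟨1, fun t ht => ?_⟩
    by_contra hlt
    push_neg at hlt
    obtain ⟨htpos, c, hc, hev⟩ := ht
    obtain ⟨C, hC, hCb⟩ := hbigO
    set g : ℂ → (Fin n → ℂ) := fun s => Pi.single i s with hg
    have hgc : Continuous g := by
      apply continuous_pi; intro j
      simp only [hg, Pi.single_apply]
      by_cases h : j = i
      · simpa [h] using continuous_id'
      · simpa [h] using (continuous_const : Continuous fun _ : ℂ => (0:ℂ))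
    have hg0 : g 0 = 0 := by simp [hg]
    have hgt : Filter.Tendsto g (𝓝 0) (𝓝 (0 : Fin n → ℂ)) := by
      simpa [hg0] using hgc.tendsto 0
    have hgnorm : ∀ s : ℂ, ‖g s‖ = ‖s‖ := fun s => by simp [hg, Pi.norm_single]
    have hkey : ∀ᶠ s in 𝓝[≠] (0 : ℂ), (1:ℝ) ≤ c * C ^ t * ‖s‖ ^ (t - 1) := by
      have h1 := hgt.eventually hev
      have h2 := hgt.eventually hCb
      filter_upwards [(h1.and h2).filter_mono nhdsWithin_le_nhds, self_mem_nhdsWithin]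
        with s hs hs0
      have hspos : (0:ℝ) < ‖s‖ := norm_pos_iff.2 hs0
      have hgi : ‖g s i‖ = ‖s‖ := by simp [hg]
      have hb1 : ‖s‖ ≤ c * ‖f (g s)‖ ^ t := by rw [← hgi]; exact hs.1
      have hb2 : ‖f (g s)‖ ≤ C * ‖s‖ := by rw [← hgnorm s]; exact hs.2
      have hb3 : ‖f (g s)‖ ^ t ≤ (C * ‖s‖) ^ t :=
        Real.rpow_le_rpow (norm_nonneg _) hb2 htpos.le
      have hb4 : ‖s‖ ≤ c * (C ^ t * ‖s‖ ^ t) := by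
        rw [← Real.mul_rpow hC.le (norm_nonneg s)] at *
        exact hb1.trans (mul_le_mul_of_nonneg_left hb3 hc.le)
      have hsplit : ‖s‖ ^ t = ‖s‖ ^ (t - 1) * ‖s‖ := by
        have h5 : ‖s‖ ^ (t - 1 + 1) = ‖s‖ ^ (t - 1) * ‖s‖ ^ (1:ℝ) := Real.rpow_add hspos _ _
        simpa [Real.rpow_one, sub_add_cancel] using h5
      have hfin : 1 * ‖s‖ ≤ (c * C ^ t * ‖s‖ ^ (t - 1)) * ‖s‖ := by
        rw [one_mul]
        calc ‖s‖ ≤ c * (C ^ t * ‖s‖ ^ t) := hb4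
          _ = (c * C ^ t * ‖s‖ ^ (t - 1)) * ‖s‖ := by rw [hsplit]; ring
      exact le_of_mul_le_mul_right hfin hspos
    have htend0 : Filter.Tendsto (fun s : ℂ => c * C ^ t * ‖s‖ ^ (t - 1))
        (𝓝[≠] (0 : ℂ)) (𝓝 0) := by
      have hn1 : Filter.Tendsto (fun s : ℂ => ‖s‖) (𝓝[≠] (0:ℂ)) (𝓝 0) := by
        have := (continuous_norm (E := ℂ)).tendsto 0
        simpa using this.mono_left nhdsWithin_le_nhds
      have hn2 : Filter.Tendsto (fun s : ℂ => ‖s‖ ^ (t - 1)) (𝓝[≠] (0:ℂ)) (𝓝 0) := by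
        have hc2 : ContinuousAt (fun y : ℝ => y ^ (t - 1)) 0 :=
          Real.continuousAt_rpow_const 0 (t - 1) (Or.inr (by linarith))
        have := hc2.tendsto.comp hn1
        simpa [Function.comp_def, Real.zero_rpow (by linarith : t - 1 ≠ 0)] using this
      have := hn2.const_mul (c * C ^ t)
      simpa using this
    have hcontra : (1:ℝ) ≤ 0 := ge_of_tendsto htend0 hkey
    linarith
  -- the set A
  set A : Set ℝ := {x : ℝ | ∃ i : Fin n, x = relLojExp f fun z => z i} with hAdef
  have hAfin : A.Finite := by
    have : A = Set.range fun i : Fin n => relLojExp f fun z => z i := by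
      ext x; constructor
      · rintro ⟨i, rfl⟩; exact ⟨i, rfl⟩
      · rintro ⟨i, rfl⟩; exact ⟨i, rfl⟩
    rw [this]; exact Set.finite_range _
  have hAne : A.Nonempty := ⟨relLojExp f fun z => z ⟨0, hn⟩, ⟨0, hn⟩, rfl⟩
  have hAnonneg : ∀ x ∈ A, 0 ≤ x := by
    rintro x ⟨i, rfl⟩
    rw [hrel]
    exact Real.sSup_nonneg fun t ht => ht.1.le
  by_cases hSne : S.Nonempty
  · -- nonempty case
    obtain ⟨θ₀, hθ₀⟩ := hSne
    have hTne : ∀ i, (T i).Nonempty := fun i => ⟨θ₀⁻¹, hST θ₀ hθ₀ i⟩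
    have hrpos : ∀ i, 0 < sSup (T i) := by
      intro i
      obtain ⟨t, ht⟩ := hTne i
      exact lt_of_lt_of_le ht.1 (le_csSup (hTbdd i) ht)
    set m : ℝ := sInf A with hmdef
    have hmA : m ∈ A := hAne.csInf_mem hAfin
    obtain ⟨i₀, hi₀⟩ := hmA
    have hmpos : 0 < m := by rw [hi₀, hrel]; exact hrpos i₀
    have hmle : ∀ i, m ≤ sSup (T i) := fun i =>
      csInf_le hAfin.bddBelow ⟨i, (hrel i).symm ▸ rfl⟩
    have hSbdd : BddBelow S := ⟨0, fun x hx => hx.1.le⟩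
    rw [hloj]
    refine le_antisymm ?_ ?_
    · -- sInf S ≤ m⁻¹
      refine le_of_forall_pos_le_add fun ε hε => ?_
      set t : ℝ := (m⁻¹ + ε)⁻¹ with htdef
      have htpos : 0 < t := by positivity
      have htm : t < m := by
        rw [htdef]
        calc (m⁻¹ + ε)⁻¹ < (m⁻¹)⁻¹ := by
              apply inv_strictAnti₀ (inv_pos.2 hmpos)
              linarith
          _ = m := inv_inv m
      have htTi : ∀ i, t ∈ T i := by
        intro i
        obtain ⟨t', ht', htt'⟩ := exists_lt_of_lt_csSup (hTne i) (htm.trans_le (hmle i))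
        exact hTdown i t' ht' t htpos htt'.le
      have := csInf_le hSbdd (hTS t htpos htTi)
      rwa [htdef, inv_inv] at this
    · -- m⁻¹ ≤ sInf S
      refine le_csInf ⟨θ₀, hθ₀⟩ fun θ hθ => ?_
      have h1 : θ⁻¹ ≤ sSup (T i₀) := le_csSup (hTbdd i₀) (hST θ hθ i₀)
      have h2 : θ⁻¹ ≤ m := by rw [hi₀, hrel]; exact h1
      exact inv_le_of_inv_le₀ hθ.1 h2
  · -- empty case
    have hSemp : S = ∅ := Set.not_nonempty_iff_eq_empty.1 hSne
    have hTemp : ∃ i, T i = ∅ := by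
      by_contra hall
      push_neg at hall
      have hne : ∀ i, (T i).Nonempty := hall
      choose t ht using hne
      set t0 : ℝ := Finset.univ.inf' (Finset.univ_nonempty_iff.2 ⟨⟨0, hn⟩⟩) t with ht0def
      have ht0pos : 0 < t0 := by
        rw [ht0def]
        apply Finset.lt_inf'_iff _ |>.2
        exact fun i _ => (ht i).1
      have ht0mem : ∀ i, t0 ∈ T i := fun i =>
        hTdown i (t i) (ht i) t0 ht0pos (Finset.inf'_le _ (Finset.mem_univ i))
      have : t0⁻¹ ∈ S := hTS t0 ht0pos ht0mem
      rw [hSemp] at this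
      exact this
    obtain ⟨i₀, hi₀⟩ := hTemp
    have h0A : (0:ℝ) ∈ A := by
      refine ⟨i₀, ?_⟩
      rw [hrel, hi₀]
      exact (Real.sSup_empty).symm
    have hA0 : sInf A = 0 :=
      le_antisymm (csInf_le hAfin.bddBelow h0A) (le_csInf hAne hAnonneg)
    rw [hloj, hSemp, Real.sInf_empty, hA0, inv_zero]


end LojPaper
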